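/- arXiv:math/0009086 — 4 statements merged into one kernel-verified Lean document; each statement's English description precedes it below -/
import Mathlib

section
/- Let G be a groupoid on a topological space X and H a wide subgroupoid of G. Let s be a local subgroupoid of G given by the atlas {(Uₓ, Hₓ)}, let 𝓤 = {Uₓ}, and for each open cover 𝓥 = {Vₓ} refining 𝓤 (x ∈ Vₓ ⊆ Uₓ) let H_𝓥 be the subgroupoid of G generated by {Hₓ|Vₓ : x ∈ X}. Then glob(s) = ⋂ {H_𝓥 : 𝓥 ≤ 𝓤}. -/
open CategoryTheory

universe u v

variable {X : Type u} [TopologicalSpace X] [Groupoid.{v} X]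

/-- The set of arrows of a groupoid `G` with object set `X`. -/
abbrev Arr (X : Type u) [Groupoid.{v} X] : Type (max u v) := Σ x y : X, x ⟶ y

/-- The arrow `⟨x, y, f⟩` determined by `f : x ⟶ y`. -/
def mkArr {x y : X} (f : x ⟶ y) : Arr X := ⟨x, y, f⟩

/-- The restriction `S|V` of a set of arrows to those with source and target in `V`. -/
def rstr (S : Set (Arr X)) (V : Set X) : Set (Arr X) :=
  {a | a ∈ S ∧ a.1 ∈ V ∧ a.2.1 ∈ V}

/-- `S` is (the arrow set of) a wide subgroupoid of `G|U`: all its arrows have source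
and target in `U`, it contains all identities of points of `U`, and it is closed
under composition and inverse. -/
def IsSubgpdOn (U : Set X) (S : Set (Arr X)) : Prop :=
  (∀ a ∈ S, a.1 ∈ U ∧ a.2.1 ∈ U) ∧
  (∀ x ∈ U, mkArr (𝟙 x) ∈ S) ∧
  (∀ ⦃x y z : X⦄ (f : x ⟶ y) (g : y ⟶ z), mkArr f ∈ S → mkArr g ∈ S →
    mkArr (f ≫ g) ∈ S) ∧
  (∀ ⦃x y : X⦄ (f : x ⟶ y), mkArr f ∈ S → mkArr (Groupoid.inv f) ∈ S)

/-- The wide subgroupoid of `G|U` generated by a set `S` of arrows. -/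
def gen (U : Set X) (S : Set (Arr X)) : Set (Arr X) :=
  ⋂₀ {T | IsSubgpdOn U T ∧ S ⊆ T}

/-- An atlas `{(Uₓ, Hₓ) : x ∈ Y}` for a local subgroupoid of `G` over the open set `Y`:
each `Uₓ` is an open neighbourhood of `x` in `Y`, `Hₓ` is a wide subgroupoid of `G|Uₓ`,
and any two charts agree locally (local compatibility). -/
def IsAtlas (Y : Set X) (U : X → Set X) (H : X → Set (Arr X)) : Prop :=
  (∀ x ∈ Y, IsOpen (U x) ∧ x ∈ U x ∧ U x ⊆ Y ∧ IsSubgpdOn (U x) (H x)) ∧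
  (∀ x ∈ Y, ∀ y ∈ Y, ∀ z ∈ U x ∩ U y, ∃ W, IsOpen W ∧ z ∈ W ∧ W ⊆ U x ∩ U y ∧
    rstr (H x) W = rstr (H y) W)

/-- `s ≤ loc(K)` for the local subgroupoid `s` given by the atlas `(U, H)` over `Y`:
at every point of `Y` the germ of the chart is contained in the germ of `K`. -/
def leLoc (Y : Set X) (U : X → Set X) (H : X → Set (Arr X)) (K : Set (Arr X)) : Prop :=
  ∀ x ∈ Y, ∃ W, IsOpen W ∧ x ∈ W ∧ W ⊆ U x ∩ Y ∧ rstr (H x) W ⊆ rstr K W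

/-- `glob(s)`: the intersection of all wide subgroupoids `K` of `G|Y`
with `s ≤ loc(K)`. -/
def glob (Y : Set X) (U : X → Set X) (H : X → Set (Arr X)) : Set (Arr X) :=
  ⋂₀ {K | IsSubgpdOn Y K ∧ leLoc Y U H K}

/-- The transitivity component of `x` in the (sub)groupoid with arrow set `S`. -/
def tcomp (S : Set (Arr X)) (x : X) : Set X := {y | ∃ f : x ⟶ y, mkArr f ∈ S}

/-- `s` (given by the atlas `(U,H)` over `Y`) is coherent: `s ≤ loc(glob(s))`. -/
def Coherent (Y : Set X) (U : X → Set X) (H : X → Set (Arr X)) : Prop :=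
  leLoc Y U H (glob Y U H)

/-- `s` is globally coherent: `s = loc(glob(s))`, i.e. at each point the germ of the
chart equals the germ of `glob(s)`. -/
def GloballyCoherent (Y : Set X) (U : X → Set X) (H : X → Set (Arr X)) : Prop :=
  ∀ x ∈ Y, ∃ W, IsOpen W ∧ x ∈ W ∧ W ⊆ U x ∩ Y ∧ rstr (H x) W = rstr (glob Y U H) W

/-- For a local subgroupoid `s` of `G` given by an atlas `{(Uₓ, Hₓ)}` and, for each
open cover `𝓥 = {Vₓ}` refining `𝓤 = {Uₓ}` (with `x ∈ Vₓ ⊆ Uₓ`), letting `H_𝓥` be the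
subgroupoid generated by the restrictions `Hₓ|Vₓ`, one has
`glob(s) = ⋂ {H_𝓥 : 𝓥 ≤ 𝓤}`. -/
theorem stmt12 (U : X → Set X) (H : X → Set (Arr X))
    (hA : IsAtlas Set.univ U H) :
    glob Set.univ U H =
      ⋂ V ∈ {V : X → Set X | ∀ x, IsOpen (V x) ∧ x ∈ V x ∧ V x ⊆ U x},
        gen Set.univ (⋃ x, rstr (H x) (V x)) := by
  ext a
  simp only [glob, gen, Set.mem_sInter, Set.mem_iInter, Set.mem_setOf_eq]
  constructor
  · intro h V hV T hT
    refine h T ⟨hT.1, ?_⟩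
    intro x _
    refine ⟨V x, (hV x).1, (hV x).2.1, fun y hy => ⟨(hV x).2.2 hy, trivial⟩, ?_⟩
    intro b hb
    exact ⟨hT.2 (Set.mem_iUnion.mpr ⟨x, hb⟩), hb.2⟩
  · intro h K hK
    obtain ⟨hKsub, hKloc⟩ := hK
    choose W hWopen hWmem hWsub hWincl using fun x => hKloc x trivial
    refine h W (fun x => ⟨hWopen x, hWmem x, fun y hy => (hWsub x hy).1⟩) K ⟨hKsub, ?_⟩
    intro b hb
    obtain ⟨x, hbx⟩ := Set.mem_iUnion.mp hb
    exact (hWincl x hbx).1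
end

section
/- Let H be a wide subgroupoid of a groupoid G on a topological space X and s = loc(H). For any open cover 𝓥 = {Vₓ} of X, the transitivity components of the subgroupoid H_𝓥 generated by {H|Vₓ} are relatively open and relatively closed in the transitivity components of H. -/
open CategoryTheory

universe u v

variable {X : Type u} [TopologicalSpace X] [Groupoid.{v} X]

lemma genSubgpd (S : Set (Arr X)) : IsSubgpdOn Set.univ (gen Set.univ S) := by
  refine ⟨fun a _ => ⟨trivial, trivial⟩, ?_, ?_, ?_⟩
  · intro x _
    exact Set.mem_sInter.mpr fun T hT => hT.1.2.1 x trivial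
  · intro x y z f g hf hg
    exact Set.mem_sInter.mpr fun T hT =>
      hT.1.2.2.1 f g (Set.mem_sInter.mp hf T hT) (Set.mem_sInter.mp hg T hT)
  · intro x y f hf
    exact Set.mem_sInter.mpr fun T hT => hT.1.2.2.2 f (Set.mem_sInter.mp hf T hT)

/-- Let `H` be a wide subgroupoid of `G` on `X` (and `s = loc(H)`).  For any open
cover `𝓥 = {Vₓ}` of `X`, the transitivity components of the subgroupoid `H_𝓥`
generated by the restrictions `H|Vₓ` are relatively open and relatively closed in
the transitivity components of `H`. -/
theorem stmt13 (H : Set (Arr X)) (hH : IsSubgpdOn Set.univ H)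
    (V : X → Set X) (hV : ∀ x, IsOpen (V x) ∧ x ∈ V x) :
    ∀ x : X,
      IsOpen {y : tcomp H x | (y : X) ∈ tcomp (gen Set.univ (⋃ z, rstr H (V z))) x} ∧
      IsClosed {y : tcomp H x | (y : X) ∈ tcomp (gen Set.univ (⋃ z, rstr H (V z))) x} := by
  intro x
  set S : Set (Arr X) := ⋃ z, rstr H (V z) with hSdef
  set K : Set (Arr X) := gen Set.univ S with hKdef
  have hKsub : IsSubgpdOn Set.univ K := genSubgpd S
  have hSK : S ⊆ K := fun a ha => Set.mem_sInter.mpr fun T hT => hT.2 ha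
  -- bridge: an arrow of `H` between two points of `tcomp H x` lying in a common `V y`
  -- already lies in `K`
  have bridge : ∀ {y y' : X}, y ∈ tcomp H x → y' ∈ tcomp H x → y' ∈ V y →
      ∃ h : y ⟶ y', mkArr h ∈ K := by
    rintro y y' ⟨g, hg⟩ ⟨g', hg'⟩ hy'
    refine ⟨Groupoid.inv g ≫ g', hSK ?_⟩
    refine Set.mem_iUnion.mpr ⟨y, ?_⟩
    exact ⟨hH.2.2.1 _ _ (hH.2.2.2 g hg) hg', (hV y).2, hy'⟩
  have fwd : ∀ {y y' : X}, y ∈ tcomp H x → y' ∈ tcomp H x → y' ∈ V y →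
      y ∈ tcomp K x → y' ∈ tcomp K x := by
    rintro y y' hy hy' hv ⟨f, hf⟩
    obtain ⟨h, hh⟩ := bridge hy hy' hv
    exact ⟨f ≫ h, hKsub.2.2.1 f h hf hh⟩
  have bwd : ∀ {y y' : X}, y ∈ tcomp H x → y' ∈ tcomp H x → y' ∈ V y →
      y' ∈ tcomp K x → y ∈ tcomp K x := by
    rintro y y' hy hy' hv ⟨f', hf'⟩
    obtain ⟨h, hh⟩ := bridge hy hy' hv
    exact ⟨f' ≫ Groupoid.inv h, hKsub.2.2.1 _ _ hf' (hKsub.2.2.2 h hh)⟩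
  constructor
  · have heq : {y : tcomp H x | (y : X) ∈ tcomp K x} =
        Subtype.val ⁻¹' (⋃ y ∈ {y | y ∈ tcomp H x ∧ y ∈ tcomp K x}, V y) := by
      ext ⟨y', hy'⟩
      simp only [Set.mem_setOf_eq, Set.mem_preimage, Set.mem_iUnion, exists_prop]
      constructor
      · intro h; exact ⟨y', ⟨hy', h⟩, (hV y').2⟩
      · rintro ⟨y, ⟨hyH, hyK⟩, hmem⟩
        exact fwd hyH hy' hmem hyK
    rw [heq]
    exact (isOpen_biUnion fun y _ => (hV y).1).preimage continuous_subtype_val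
  · rw [← isOpen_compl_iff]
    have heq : {y : tcomp H x | (y : X) ∈ tcomp K x}ᶜ =
        Subtype.val ⁻¹' (⋃ y ∈ {y | y ∈ tcomp H x ∧ y ∉ tcomp K x}, V y) := by
      ext ⟨y', hy'⟩
      simp only [Set.mem_compl_iff, Set.mem_setOf_eq, Set.mem_preimage, Set.mem_iUnion,
        exists_prop]
      constructor
      · intro h; exact ⟨y', ⟨hy', h⟩, (hV y').2⟩
      · rintro ⟨y, ⟨hyH, hyK⟩, hmem⟩ hc
        exact hyK (bwd hyH hy' hmem hc)
    rw [heq]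
    exact (isOpen_biUnion fun y _ => (hV y).1).preimage continuous_subtype_val
end

section
/- Let H be a wide subgroupoid of a groupoid G on X and s = loc(H). If every point x ∈ X has an open neighborhood Wₓ such that H|Wₓ has connected transitivity components (in the subspace topology), then s is coherent, i.e., s ≤ loc(glob(s)). -/
open CategoryTheory

universe u v

variable {X : Type u} [TopologicalSpace X] [Groupoid.{v} X]

/-- Let `H` be a wide subgroupoid of `G` on `X` and `s = loc(H)`.  If every point
`x ∈ X` has an open neighbourhood `Wₓ` on which `H|Wₓ` has connected transitivity
components, then `s` is coherent, i.e. `s ≤ loc(glob(s))`. -/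
theorem stmt14 (H : Set (Arr X)) (hH : IsSubgpdOn Set.univ H)
    (hconn : ∀ x : X, ∃ W, IsOpen W ∧ x ∈ W ∧
      ∀ y ∈ W, IsConnected (tcomp (rstr H W) y)) :
    Coherent Set.univ (fun _ => Set.univ) (fun _ => H) := by
  obtain ⟨-, hHid, hHcomp, hHinv⟩ := hH
  intro x _
  obtain ⟨W, hWopen, hxW, hWconn⟩ := hconn x
  refine ⟨W, hWopen, hxW, by simp, ?_⟩
  rintro ⟨a, b, f⟩ ⟨hfH, haW, hbW⟩
  refine ⟨?_, haW, hbW⟩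
  rintro K ⟨⟨-, hKid, hKcomp, hKinv⟩, hKloc⟩
  choose Wf hWfo hWfm hWfsub' hWfsub using fun z => hKloc z trivial
  -- every loop of H lies in K
  have hloop : ∀ {y : X} (l : y ⟶ y), mkArr l ∈ H → mkArr l ∈ K := by
    intro y l hl
    exact (hWfsub y ⟨hl, hWfm y, hWfm y⟩).1
  set C : Set X := tcomp (rstr H W) a with hCdef
  have hC : IsConnected C := hWconn a haW
  -- the set of points reachable from a within K ∩ H|W
  set P : Set X := {y | ∃ g : a ⟶ y, mkArr g ∈ H ∧ y ∈ W ∧ mkArr g ∈ K} with hPdef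
  -- between any two points of C there is an arrow of H
  have harr : ∀ z ∈ C, ∀ z' ∈ C, ∃ h : z ⟶ z', mkArr h ∈ H := by
    rintro z ⟨p, hp, -, -⟩ z' ⟨q, hq, -, -⟩
    exact ⟨Groupoid.inv p ≫ q, hHcomp _ _ (hHinv p hp) hq⟩
  have hCW : ∀ z ∈ C, z ∈ W := by rintro z ⟨p, -, -, hz⟩; exact hz
  -- transfer of membership in P along a small neighbourhood
  have key : ∀ z ∈ C, ∀ z' ∈ C, z' ∈ Wf z → (z ∈ P ↔ z' ∈ P) := by
    intro z hz z' hz' hz'W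
    obtain ⟨h, hh⟩ := harr z hz z' hz'
    have hhK : mkArr h ∈ K := (hWfsub z ⟨hh, hWfm z, hz'W⟩).1
    constructor
    · rintro ⟨g, hgH, -, hgK⟩
      exact ⟨g ≫ h, hHcomp _ _ hgH hh, hCW z' hz', hKcomp _ _ hgK hhK⟩
    · rintro ⟨g, hgH, -, hgK⟩
      exact ⟨g ≫ Groupoid.inv h, hHcomp _ _ hgH (hHinv _ hh), hCW z hz,
        hKcomp _ _ hgK (hKinv _ hhK)⟩
  have haC : a ∈ C := ⟨𝟙 a, hHid a trivial, haW, haW⟩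
  have hbC : b ∈ C := ⟨f, hfH, haW, hbW⟩
  have haP : a ∈ P := ⟨𝟙 a, hHid a trivial, haW, hKid a trivial⟩
  set U : Set X := ⋃ z ∈ {z | z ∈ C ∧ z ∈ P}, Wf z with hUdef
  set V : Set X := ⋃ z ∈ {z | z ∈ C ∧ z ∉ P}, Wf z with hVdef
  have hUo : IsOpen U := isOpen_biUnion fun z _ => hWfo z
  have hVo : IsOpen V := isOpen_biUnion fun z _ => hWfo z
  have hCU : ∀ y ∈ C ∩ U, y ∈ P := by
    rintro y ⟨hyC, hyU⟩
    obtain ⟨z, ⟨hzC, hzP⟩, hyW⟩ := Set.mem_iUnion₂.1 hyU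
    exact (key z hzC y hyC hyW).1 hzP
  have hCV : ∀ y ∈ C ∩ V, y ∉ P := by
    rintro y ⟨hyC, hyV⟩
    obtain ⟨z, ⟨hzC, hzP⟩, hyW⟩ := Set.mem_iUnion₂.1 hyV
    exact fun hyP => hzP ((key z hzC y hyC hyW).2 hyP)
  have hbP : b ∈ P := by
    by_contra hbP
    have hcov : C ⊆ U ∪ V := by
      intro z hz
      by_cases hzP : z ∈ P
      · exact Or.inl (Set.mem_biUnion (⟨hz, hzP⟩ : z ∈ {z | z ∈ C ∧ z ∈ P}) (hWfm z))
      · exact Or.inr (Set.mem_biUnion (⟨hz, hzP⟩ : z ∈ {z | z ∈ C ∧ z ∉ P}) (hWfm z))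
    have haU : a ∈ U := Set.mem_biUnion (⟨haC, haP⟩ : a ∈ {z | z ∈ C ∧ z ∈ P}) (hWfm a)
    have hbV : b ∈ V := Set.mem_biUnion (⟨hbC, hbP⟩ : b ∈ {z | z ∈ C ∧ z ∉ P}) (hWfm b)
    obtain ⟨w, hwC, hwU, hwV⟩ :=
      hC.isPreconnected U V hUo hVo hcov ⟨a, haC, haU⟩ ⟨b, hbC, hbV⟩
    exact hCV w ⟨hwC, hwV⟩ (hCU w ⟨hwC, hwU⟩)
  obtain ⟨g, hgH, -, hgK⟩ := hbP
  have hloopK : mkArr (Groupoid.inv g ≫ f) ∈ K :=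
    hloop _ (hHcomp _ _ (hHinv _ hgH) hfH)
  have : mkArr (g ≫ Groupoid.inv g ≫ f) ∈ K := hKcomp _ _ hgK hloopK
  exact (by simpa using this : mkArr f ∈ K)
end

section
/- Let H be a wide subgroupoid of a groupoid G on a topological space X. If all transitivity components of H are connected, then H = glob(loc(H)). Conversely, if H = glob(loc(H)) and the transitivity components of H are closed in X, then they are connected. -/
open CategoryTheory

universe u v

variable {X : Type u} [TopologicalSpace X] [Groupoid.{v} X]

/-- Let `H` be a wide subgroupoid of `G` on `X`.  If all transitivity components of
`H` are connected, then `H = glob(loc(H))`.  Conversely, if `H = glob(loc(H))` and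
the transitivity components of `H` are closed in `X`, then they are connected. -/
theorem stmt15 (H : Set (Arr X)) (hH : IsSubgpdOn Set.univ H) :
    ((∀ x : X, IsConnected (tcomp H x)) →
      H = glob Set.univ (fun _ => Set.univ) (fun _ => H)) ∧
    (H = glob Set.univ (fun _ => Set.univ) (fun _ => H) →
      (∀ x : X, IsClosed (tcomp H x)) → ∀ x : X, IsConnected (tcomp H x)) := by
  obtain ⟨-, hHid, hHcomp, hHinv⟩ := hH
  constructor
  · -- connected components ⇒ H = glob(loc H)
    intro hconn
    apply Set.Subset.antisymm
    · -- H ⊆ glob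
      intro a ha
      rw [glob, Set.mem_sInter]
      rintro K ⟨⟨-, hKid, hKcomp, hKinv⟩, hKloc⟩
      choose W hWo hWmem hWsub hWrstr using fun z => hKloc z trivial
      obtain ⟨x, y, f⟩ := a
      set C := tcomp H x with hC
      set A := {w : X | ∃ g : x ⟶ w, mkArr g ∈ H ∧ mkArr g ∈ K} with hA
      have key : ∀ (yy z w : X), z ∈ W yy → w ∈ W yy → z ∈ A → w ∈ C → w ∈ A := by
        rintro yy z w hz hw ⟨g, hgH, hgK⟩ ⟨h, hhH⟩
        have h1 : mkArr (Groupoid.inv g ≫ h) ∈ H := hHcomp _ _ (hHinv _ hgH) hhH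
        have h2 : mkArr (Groupoid.inv g ≫ h) ∈ K := (hWrstr yy ⟨h1, hz, hw⟩).1
        have h3 : mkArr (g ≫ (Groupoid.inv g ≫ h)) ∈ K := hKcomp _ _ hgK h2
        have he : g ≫ Groupoid.inv g ≫ h = h := by
          rw [← Category.assoc, Groupoid.comp_inv, Category.id_comp]
        rw [he] at h3
        exact ⟨h, hhH, h3⟩
      have hxA : x ∈ A := ⟨𝟙 x, hHid x trivial, hKid x trivial⟩
      have hxC : x ∈ C := ⟨𝟙 x, hHid x trivial⟩
      have hyC : y ∈ C := ⟨f, ha⟩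
      have hyA : y ∈ A := by
        by_contra hyA
        obtain ⟨hCne, hCpre⟩ := hconn x
        set u := ⋃ z ∈ C ∩ A, W z with hu
        set v := ⋃ z ∈ C \ A, W z with hv
        have hu_o : IsOpen u := isOpen_biUnion fun z _ => hWo z
        have hv_o : IsOpen v := isOpen_biUnion fun z _ => hWo z
        have hsub : C ⊆ u ∪ v := by
          intro z hz
          by_cases hzA : z ∈ A
          · exact Or.inl (Set.mem_biUnion ⟨hz, hzA⟩ (hWmem z))
          · exact Or.inr (Set.mem_biUnion ⟨hz, hzA⟩ (hWmem z))
        obtain ⟨z, hzC, hzu, hzv⟩ := hCpre u v hu_o hv_o hsub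
          ⟨x, hxC, Set.mem_biUnion ⟨hxC, hxA⟩ (hWmem x)⟩
          ⟨y, hyC, Set.mem_biUnion ⟨hyC, hyA⟩ (hWmem y)⟩
        obtain ⟨p, hp, hzp⟩ := Set.mem_iUnion₂.mp hzu
        obtain ⟨q, hq, hzq⟩ := Set.mem_iUnion₂.mp hzv
        have hzA : z ∈ A := key p p z (hWmem p) hzp hp.2 hzC
        exact hq.2 (key q z q hzq (hWmem q) hzA hq.1)
      obtain ⟨g, hgH, hgK⟩ := hyA
      have h1 : mkArr (Groupoid.inv g ≫ f) ∈ H := hHcomp _ _ (hHinv _ hgH) ha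
      have h2 : mkArr (Groupoid.inv g ≫ f) ∈ K := (hWrstr y ⟨h1, hWmem y, hWmem y⟩).1
      have h3 : mkArr (g ≫ (Groupoid.inv g ≫ f)) ∈ K := hKcomp _ _ hgK h2
      have he : g ≫ Groupoid.inv g ≫ f = f := by
        rw [← Category.assoc, Groupoid.comp_inv, Category.id_comp]
      rwa [he] at h3
    · -- glob ⊆ H
      intro a ha
      exact Set.mem_sInter.mp ha H
        ⟨⟨fun a _ => ⟨trivial, trivial⟩, hHid, hHcomp, hHinv⟩,
          fun z _ => ⟨Set.univ, isOpen_univ, trivial, by simp, subset_rfl⟩⟩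
  · -- globally coherent + closed components ⇒ connected components
    intro hglob hcl x
    refine ⟨⟨x, 𝟙 x, hHid x trivial⟩, ?_⟩
    rw [isPreconnected_iff_subset_of_fully_disjoint_closed (hcl x)]
    intro u v hu hv hsub hdisj
    by_contra hcon
    push_neg at hcon
    obtain ⟨hnu, hnv⟩ := hcon
    obtain ⟨b, hbC, hbu'⟩ := Set.not_subset.mp hnu
    obtain ⟨a, haC, hav'⟩ := Set.not_subset.mp hnv
    have hbv : b ∈ v := (hsub hbC).resolve_left hbu'
    have hau : a ∈ u := (hsub haC).resolve_right hav'
    set C := tcomp H x with hC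
    set A := C ∩ u with hA
    set B := C ∩ v with hB
    have hAB : ∀ z, z ∈ A → z ∈ B → False :=
      fun z hzA hzB => Set.disjoint_left.mp hdisj hzA.2 hzB.2
    set K := {a : Arr X | a ∈ H ∧ ¬(a.1 ∈ A ∧ a.2.1 ∈ B) ∧ ¬(a.1 ∈ B ∧ a.2.1 ∈ A)}
      with hKdef
    have hKsub : IsSubgpdOn Set.univ K := by
      refine ⟨fun a _ => ⟨trivial, trivial⟩,
        fun z _ => ⟨hHid z trivial, fun ⟨h1, h2⟩ => hAB z h1 h2,
          fun ⟨h1, h2⟩ => hAB z h2 h1⟩, ?_, ?_⟩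
      · rintro p q r f g ⟨hfH, hf1, hf2⟩ ⟨hgH, hg1, hg2⟩
        refine ⟨hHcomp _ _ hfH hgH, ?_, ?_⟩
        · rintro ⟨hp, hr⟩
          have hqC : q ∈ C := by
            obtain ⟨gp, hgp⟩ := hp.1
            exact ⟨gp ≫ f, hHcomp _ _ hgp hfH⟩
          rcases hsub hqC with hqu | hqv
          · exact hg1 ⟨⟨hqC, hqu⟩, hr⟩
          · exact hf1 ⟨hp, hqC, hqv⟩
        · rintro ⟨hp, hr⟩
          have hqC : q ∈ C := by
            obtain ⟨gp, hgp⟩ := hp.1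
            exact ⟨gp ≫ f, hHcomp _ _ hgp hfH⟩
          rcases hsub hqC with hqu | hqv
          · exact hf2 ⟨hp, hqC, hqu⟩
          · exact hg2 ⟨⟨hqC, hqv⟩, hr⟩
      · rintro p q f ⟨hfH, hf1, hf2⟩
        exact ⟨hHinv _ hfH, fun ⟨h1, h2⟩ => hf2 ⟨h2, h1⟩,
          fun ⟨h1, h2⟩ => hf1 ⟨h2, h1⟩⟩
    have hAcl : IsClosed A := (hcl x).inter hu
    have hBcl : IsClosed B := (hcl x).inter hv
    have hKloc : leLoc Set.univ (fun _ => Set.univ) (fun _ => H) K := by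
      intro z _
      by_cases hzB : z ∈ B
      · refine ⟨Aᶜ, hAcl.isOpen_compl, fun hzA => hAB z hzA hzB, by simp, ?_⟩
        rintro ⟨p, q, g⟩ ⟨hgH, hp, hq⟩
        exact ⟨⟨hgH, fun ⟨h1, _⟩ => hp h1, fun ⟨_, h2⟩ => hq h2⟩, hp, hq⟩
      · refine ⟨Bᶜ, hBcl.isOpen_compl, hzB, by simp, ?_⟩
        rintro ⟨p, q, g⟩ ⟨hgH, hp, hq⟩
        exact ⟨⟨hgH, fun ⟨_, h2⟩ => hq h2, fun ⟨h1, _⟩ => hp h1⟩, hp, hq⟩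
    have hHK : H ⊆ K := by
      rw [hglob]
      exact fun a ha => Set.mem_sInter.mp ha K ⟨hKsub, hKloc⟩
    obtain ⟨ga, hga⟩ := id haC
    obtain ⟨gb, hgb⟩ := id hbC
    have harr : mkArr (Groupoid.inv ga ≫ gb) ∈ H := hHcomp _ _ (hHinv _ hga) hgb
    exact (hHK harr).2.1 ⟨⟨haC, hau⟩, hbC, hbv⟩
end
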